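/- Let Φ be a positive unital linear map from the n×n complex matrices to themselves, let x be a Hermitian n×n complex matrix, let f : ℝ → ℝ be a continuous convex function, and let I ⊆ ℝ be an interval on which f is monotone (either increasing or decreasing) and on which f(t) ≤ 0. Set p := e_I(Φ(x)), the spectral projection of Φ(x) on I. Then for every s > 0 one has rank e_{(s,∞)}((p·Φ(f(x))·p)₋) ≤ rank e_{(s,∞)}(−p·f(Φ(x))·p), where y₋ denotes the negative part in the Jordan decomposition of a Hermitian matrix y (i.e. y₋ = g(y) with g(t) = max(−t, 0)). -/

import Mathlib

open Matrix
open scoped ComplexOrder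

/-- `g` applied to a Hermitian matrix via the functional calculus
(`g(A) = ∑ᵢ g(λᵢ) Pᵢ` for the spectral decomposition `A = ∑ᵢ λᵢ Pᵢ`). -/
noncomputable def matFun {k : ℕ} {A : Matrix (Fin k) (Fin k) ℂ} (hA : A.IsHermitian)
    (g : ℝ → ℝ) : Matrix (Fin k) (Fin k) ℂ := hA.cfc g

lemma matFun_isHermitian {k : ℕ} {A : Matrix (Fin k) (Fin k) ℂ} (hA : A.IsHermitian)
    (g : ℝ → ℝ) : (matFun hA g).IsHermitian := by
  rw [matFun, ← hA.cfc_eq g]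
  exact cfc_predicate g A

/-- The spectral projection `e_S(A) = ∑_{i : λᵢ ∈ S} Pᵢ` of a Hermitian matrix `A`
on a set `S ⊆ ℝ`. -/
noncomputable def specProj {k : ℕ} {A : Matrix (Fin k) (Fin k) ℂ} (hA : A.IsHermitian)
    (S : Set ℝ) : Matrix (Fin k) (Fin k) ℂ := matFun hA (Set.indicator S 1)

section helpers

variable {k : ℕ} {A : Matrix (Fin k) (Fin k) ℂ} (hA : A.IsHermitian)

local notation "Um" => (Matrix.IsHermitian.eigenvectorUnitary hA : Matrix (Fin k) (Fin k) ℂ)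

lemma star_vecMul_eigen (v : Fin k → ℂ) : star v ᵥ* Um = star ((star Um) *ᵥ v) := by
  rw [star_mulVec, star_eq_conjTranspose, conjTranspose_conjTranspose]

lemma quadForm (g : ℝ → ℝ) (v : Fin k → ℂ) :
    star v ⬝ᵥ (matFun hA g) *ᵥ v
      = ((∑ i, g (hA.eigenvalues i) * Complex.normSq (((star Um) *ᵥ v) i) : ℝ) : ℂ) := by
  set c := (star Um) *ᵥ v with hc
  rw [matFun, Matrix.IsHermitian.cfc, Unitary.conjStarAlgAut_apply, ← mulVec_mulVec, ← mulVec_mulVec,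
    dotProduct_mulVec, star_vecMul_eigen hA v, ← hc]
  simp only [dotProduct, mulVec_diagonal, Function.comp_apply, Complex.ofReal_sum]
  congr 1
  ext i
  rw [show star c i = (starRingEnd ℂ) (c i) from rfl, Complex.ofReal_mul,
    ← Complex.mul_conj (c i)]
  rw [mul_left_comm, mul_comm ((starRingEnd ℂ) (c i)) (c i)]
  rfl


lemma U_mul_star : Um * star Um = 1 :=
  (Matrix.mem_unitaryGroup_iff).mp (Matrix.IsHermitian.eigenvectorUnitary hA).2

lemma star_mul_U : star Um * Um = 1 :=
  (Matrix.mem_unitaryGroup_iff').mp (Matrix.IsHermitian.eigenvectorUnitary hA).2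

lemma matFun_one : matFun hA (fun _ => (1 : ℝ)) = 1 := by
  rw [matFun, Matrix.IsHermitian.cfc, Unitary.conjStarAlgAut_apply]
  have : (diagonal (RCLike.ofReal ∘ (fun _ => (1:ℝ)) ∘ hA.eigenvalues) : Matrix (Fin k) (Fin k) ℂ) = 1 := by
    simp [Function.comp_def]
  rw [this, mul_one, U_mul_star]

lemma matFun_id : matFun hA (fun t => t) = A := by
  rw [matFun, Matrix.IsHermitian.cfc, Unitary.conjStarAlgAut_apply]
  exact hA.spectral_theorem.symm

lemma matFun_mul (g g' : ℝ → ℝ) :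
    matFun hA g * matFun hA g' = matFun hA (fun t => g t * g' t) := by
  simp only [matFun, Matrix.IsHermitian.cfc, Unitary.conjStarAlgAut_apply, Unitary.coe_star]
  have h : ∀ (X Y : Matrix (Fin k) (Fin k) ℂ),
      (Um * X * star Um) * (Um * Y * star Um) = Um * (X * Y) * star Um := by
    intro X Y
    calc (Um * X * star Um) * (Um * Y * star Um)
        = Um * (X * ((star Um * Um) * Y)) * star Um := by simp only [mul_assoc]
      _ = Um * (X * Y) * star Um := by rw [star_mul_U, one_mul]
  rw [h, diagonal_mul_diagonal]
  congr 1
  ext i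
  simp [Function.comp_def]

lemma matFun_neg (g : ℝ → ℝ) : matFun hA (fun t => -(g t)) = -(matFun hA g) := by
  simp only [matFun, Matrix.IsHermitian.cfc, Unitary.conjStarAlgAut_apply, Unitary.coe_star]
  have : (diagonal (RCLike.ofReal ∘ (fun t => -(g t)) ∘ hA.eigenvalues) : Matrix (Fin k) (Fin k) ℂ)
      = -(diagonal (RCLike.ofReal ∘ g ∘ hA.eigenvalues)) := by
    have h1 : (RCLike.ofReal ∘ (fun t => -(g t)) ∘ hA.eigenvalues : Fin k → ℂ)
        = fun i => -((RCLike.ofReal ∘ g ∘ hA.eigenvalues : Fin k → ℂ) i) := by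
      ext i; simp [Function.comp_def]
    rw [h1, diagonal_neg]
  rw [this, Matrix.mul_neg, Matrix.neg_mul]

lemma matFun_affine (a b : ℝ) :
    matFun hA (fun t => a * t + b) = (a : ℂ) • A + (b : ℂ) • 1 := by
  conv_rhs => rw [hA.spectral_theorem, ← U_mul_star hA]
  rw [matFun, Matrix.IsHermitian.cfc]
  simp only [Unitary.conjStarAlgAut_apply]
  have step : ((a:ℂ) • (Um * diagonal (RCLike.ofReal ∘ hA.eigenvalues) * star Um)
        + (b:ℂ) • (Um * star Um))
      = Um * ((a:ℂ) • diagonal (RCLike.ofReal ∘ hA.eigenvalues) + (b:ℂ) • 1) * star Um := by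
    rw [Matrix.mul_add, Matrix.add_mul]
    congr 1 <;> simp [Matrix.mul_smul, Matrix.smul_mul]
  rw [step]
  congr 1
  congr 1
  ext i j
  by_cases hij : i = j
  · subst hij
    simp only [diagonal_apply_eq, Function.comp_apply, Matrix.add_apply, Matrix.smul_apply,
      Matrix.one_apply_eq, smul_eq_mul]
    simp only [RCLike.ofReal, Algebra.cast, Complex.coe_algebraMap]
    push_cast
    ring
  · simp [diagonal_apply_ne _ hij, Matrix.one_apply_ne hij]

lemma matFun_posSemidef (g : ℝ → ℝ) (h : ∀ i, 0 ≤ g (hA.eigenvalues i)) :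
    (matFun hA g).PosSemidef := by
  rw [matFun, Matrix.IsHermitian.cfc, Unitary.conjStarAlgAut_apply, Matrix.star_eq_conjTranspose]
  refine Matrix.PosSemidef.mul_mul_conjTranspose_same ?_ Um
  refine Matrix.posSemidef_diagonal_iff.mpr fun i => ?_
  simpa using Complex.zero_le_real.mpr (h i)

lemma matFun_rank (S : Set ℝ) :
    (matFun hA (Set.indicator S 1)).rank = Nat.card {i // hA.eigenvalues i ∈ S} := by
  rw [matFun, Matrix.IsHermitian.cfc, Unitary.conjStarAlgAut_apply]
  have hU : IsUnit (Um).det := by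
    have h2 := congrArg Matrix.det (U_mul_star hA)
    rw [Matrix.det_mul, Matrix.det_one] at h2
    exact IsUnit.of_mul_eq_one _ h2
  have hUs : IsUnit (star Um).det := by
    have h2 := congrArg Matrix.det (star_mul_U hA)
    rw [Matrix.det_mul, Matrix.det_one] at h2
    exact IsUnit.of_mul_eq_one _ h2
  rw [mul_assoc, Matrix.rank_mul_eq_right_of_isUnit_det _ _ hU,
    Matrix.rank_mul_eq_left_of_isUnit_det _ _ hUs, Matrix.rank_diagonal,
    ← Nat.card_eq_fintype_card]
  classical
  apply Nat.card_congr
  apply Equiv.subtypeEquivRight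
  intro i
  simp only [Function.comp_apply, ne_eq, RCLike.ofReal_eq_zero]
  rw [Set.indicator_apply]
  by_cases h : hA.eigenvalues i ∈ S <;> simp [h]


lemma coord_matFun (g : ℝ → ℝ) (v : Fin k → ℂ) :
    (star Um) *ᵥ ((matFun hA g) *ᵥ v)
      = fun i => (g (hA.eigenvalues i) : ℂ) * (((star Um) *ᵥ v) i) := by
  rw [matFun, Matrix.IsHermitian.cfc, Unitary.conjStarAlgAut_apply, ← mulVec_mulVec, ← mulVec_mulVec, mulVec_mulVec,
    star_mul_U hA, one_mulVec]
  ext i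
  rw [mulVec_diagonal]
  rfl

lemma coord_zero_of_mem_range (g : ℝ → ℝ) {v : Fin k → ℂ}
    (hv : v ∈ LinearMap.range (matFun hA g).mulVecLin) :
    ∀ i, g (hA.eigenvalues i) = 0 → ((star Um) *ᵥ v) i = 0 := by
  obtain ⟨u, rfl⟩ := hv
  intro i hgi
  rw [Matrix.mulVecLin_apply, coord_matFun hA g u]
  simp [hgi]

lemma dotProduct_star_self (v : Fin k → ℂ) :
    star v ⬝ᵥ v = ((∑ i, Complex.normSq (v i) : ℝ) : ℂ) := by
  simp only [dotProduct, Pi.star_apply, Complex.ofReal_sum]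
  congr 1
  ext i
  rw [show star (v i) = (starRingEnd ℂ) (v i) from rfl, mul_comm, Complex.mul_conj]

lemma sum_normSq_coord (v : Fin k → ℂ) :
    ∑ i, Complex.normSq (((star Um) *ᵥ v) i) = ∑ i, Complex.normSq (v i) := by
  have h := quadForm hA (fun _ => (1:ℝ)) v
  rw [matFun_one hA, one_mulVec, dotProduct_star_self] at h
  have := Complex.ofReal_inj.mp h
  simp only [one_mul] at this
  exact this.symm

lemma matFun_add (g g' : ℝ → ℝ) :
    matFun hA (fun t => g t + g' t) = matFun hA g + matFun hA g' := by
  simp only [matFun, Matrix.IsHermitian.cfc, Unitary.conjStarAlgAut_apply, Unitary.coe_star]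
  have h1 : (RCLike.ofReal ∘ (fun t => g t + g' t) ∘ hA.eigenvalues : Fin k → ℂ)
      = fun i => (RCLike.ofReal ∘ g ∘ hA.eigenvalues : Fin k → ℂ) i
          + (RCLike.ofReal ∘ g' ∘ hA.eigenvalues : Fin k → ℂ) i := by
    ext i; simp [Function.comp_def]
  rw [h1, ← diagonal_add, Matrix.mul_add, Matrix.add_mul]

lemma matFun_comp (g h : ℝ → ℝ) :
    matFun (matFun_isHermitian hA g) h = matFun hA (h ∘ g) := by
  have e1 : matFun (matFun_isHermitian hA g) h = cfc h (matFun hA g) :=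
    ((matFun_isHermitian hA g).cfc_eq h).symm
  have e2 : matFun hA (h ∘ g) = cfc (h ∘ g) A := (hA.cfc_eq (h ∘ g)).symm
  rw [e1, e2, cfc_comp h g A (show IsSelfAdjoint A from hA)
    ((Matrix.finite_real_spectrum.image g).continuousOn h)
    (Matrix.finite_real_spectrum.continuousOn g), hA.cfc_eq g]
  rfl

lemma herm_conj_quad {p B : Matrix (Fin k) (Fin k) ℂ} (hp : p.IsHermitian) (v : Fin k → ℂ) :
    star v ⬝ᵥ (p * B * p) *ᵥ v = star (p *ᵥ v) ⬝ᵥ (B *ᵥ (p *ᵥ v)) := by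
  rw [← mulVec_mulVec, ← mulVec_mulVec, dotProduct_mulVec]
  congr 1
  rw [star_mulVec, Matrix.IsHermitian.eq hp]

end helpers

lemma exists_mem_both_ranges {k : ℕ} (M N : Matrix (Fin k) (Fin k) ℂ)
    (h : k < M.rank + N.rank) :
    ∃ v : Fin k → ℂ, v ≠ 0 ∧ v ∈ LinearMap.range M.mulVecLin ∧
      v ∈ LinearMap.range N.mulVecLin := by
  set p := LinearMap.range M.mulVecLin
  set q := LinearMap.range N.mulVecLin
  have hsum := Submodule.finrank_sup_add_finrank_inf_eq p q
  have hle : Module.finrank ℂ ↥(p ⊔ q) ≤ k := by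
    have := Submodule.finrank_le (p ⊔ q)
    simpa [Module.finrank_pi] using this
  have hpos : 0 < Module.finrank ℂ ↥(p ⊓ q) := by
    have : M.rank = Module.finrank ℂ ↥p := rfl
    have : N.rank = Module.finrank ℂ ↥q := rfl
    omega
  have hne : p ⊓ q ≠ ⊥ := by
    intro hbot
    rw [hbot, finrank_bot] at hpos
    exact lt_irrefl 0 hpos
  obtain ⟨v, hv, hv0⟩ := (Submodule.ne_bot_iff _).mp hne
  exact ⟨v, hv0, hv.1, hv.2⟩

lemma exists_supporting_line {f : ℝ → ℝ} (hconv : ConvexOn ℝ Set.univ f) (m : ℝ) :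
    ∃ a b : ℝ, (∀ t, a * t + b ≤ f t) ∧ a * m + b = f m := by
  classical
  set S : Set ℝ := (fun t => (f m - f t) / (m - t)) '' Set.Iio m with hS
  have hne : S.Nonempty := ⟨_, ⟨m - 1, by simp, rfl⟩⟩
  have hbdd : BddAbove S := by
    refine ⟨(f (m + 1) - f m) / (m + 1 - m), ?_⟩
    rintro r ⟨t, ht, rfl⟩
    have := hconv.slope_mono_adjacent (Set.mem_univ t) (Set.mem_univ (m+1)) ht (by linarith)
    convert this using 2 <;> ring
  set a := sSup S with ha
  refine ⟨a, f m - a * m, fun t => ?_, by ring⟩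
  rcases lt_trichotomy t m with htm | htm | htm
  · have hmem : (f m - f t) / (m - t) ∈ S := ⟨t, htm, rfl⟩
    have hle : (f m - f t) / (m - t) ≤ a := le_csSup hbdd hmem
    have hpos : 0 < m - t := by linarith
    rw [div_le_iff₀ hpos] at hle
    nlinarith
  · subst htm; linarith [le_refl (f t)]
  · have hle : a ≤ (f t - f m) / (t - m) := by
      apply csSup_le hne
      rintro r ⟨t', ht', rfl⟩
      have := hconv.slope_mono_adjacent (Set.mem_univ t') (Set.mem_univ t) ht' htm
      convert this using 2 <;> ring
    have hpos : 0 < t - m := by linarith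
    rw [le_div_iff₀ hpos] at hle
    nlinarith

lemma choi_quad {n : ℕ} (Φ : Matrix (Fin n) (Fin n) ℂ →ₗ[ℂ] Matrix (Fin n) (Fin n) ℂ)
    (hΦpos : ∀ y : Matrix (Fin n) (Fin n) ℂ, y.PosSemidef → (Φ y).PosSemidef)
    (hΦ1 : Φ 1 = 1) {x : Matrix (Fin n) (Fin n) ℂ} (hx : x.IsHermitian)
    (f : ℝ → ℝ) (a b : ℝ) (hab : ∀ t, a * t + b ≤ f t) (u : Fin n → ℂ) :
    a * (star u ⬝ᵥ (Φ x) *ᵥ u).re + b * (∑ i, Complex.normSq (u i))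
      ≤ (star u ⬝ᵥ (Φ (matFun hx f)) *ᵥ u).re := by
  have hD : (matFun hx (fun t => f t - (a * t + b))).PosSemidef :=
    matFun_posSemidef hx _ (fun i => by linarith [hab (hx.eigenvalues i)])
  have hsplit : matFun hx f
      = matFun hx (fun t => f t - (a * t + b)) + ((a:ℂ) • x + (b:ℂ) • 1) := by
    rw [← matFun_affine hx a b, ← matFun_add hx]
    congr 1
    ext t
    ring
  have hψ : Φ (matFun hx f)
      = Φ (matFun hx (fun t => f t - (a * t + b))) + ((a:ℂ) • Φ x + (b:ℂ) • 1) := by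
    rw [hsplit, map_add, map_add, _root_.map_smul, _root_.map_smul, hΦ1]
  have hpsd := (hΦpos _ hD).dotProduct_mulVec_nonneg u
  have hre : 0 ≤ (star u ⬝ᵥ (Φ (matFun hx (fun t => f t - (a * t + b)))) *ᵥ u).re := by
    have := (Complex.le_def.mp hpsd).1
    simpa using this
  rw [hψ]
  rw [Matrix.add_mulVec, Matrix.add_mulVec, dotProduct_add, dotProduct_add,
    Matrix.smul_mulVec, Matrix.smul_mulVec, Matrix.one_mulVec,
    dotProduct_smul, dotProduct_smul, dotProduct_star_self]
  simp only [Complex.add_re, smul_eq_mul, Complex.mul_re,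
    Complex.ofReal_re, Complex.ofReal_im]
  nlinarith [hre]

set_option maxHeartbeats 2000000 in
/-- **Spectral comparison on an interval where `f` is monotone and nonpositive.**
Let `Φ` be a positive unital linear map on `n×n` matrices, `x` Hermitian, `f` continuous
convex, and `I` an interval on which `f` is monotone and nonpositive; set `p = e_I(Φ(x))`.
Then for every `s > 0`,
`rank e_(s,∞)((p·Φ(f(x))·p)₋) ≤ rank e_(s,∞)(−p·f(Φ(x))·p)`, where `y₋ = g(y)` with
`g(t) = max(−t, 0)` is the negative part of the Jordan decomposition. -/
theorem specProj_rank_negPart_le_of_unital_positive_map {n : ℕ}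
    (Φ : Matrix (Fin n) (Fin n) ℂ →ₗ[ℂ] Matrix (Fin n) (Fin n) ℂ)
    (hΦpos : ∀ y : Matrix (Fin n) (Fin n) ℂ, y.PosSemidef → (Φ y).PosSemidef)
    (hΦ1 : Φ 1 = 1)
    {x : Matrix (Fin n) (Fin n) ℂ} (hx : x.IsHermitian)
    (f : ℝ → ℝ) (hf : Continuous f) (hconv : ConvexOn ℝ Set.univ f)
    (I : Set ℝ) (hI : I.OrdConnected)
    (hmono : MonotoneOn f I ∨ AntitoneOn f I) (hfI : ∀ t ∈ I, f t ≤ 0) :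
    ∀ hΦx : (Φ x).IsHermitian,
      ∀ (h1 : (specProj hΦx I * matFun hΦx f * specProj hΦx I).IsHermitian)
        (h2 : (specProj hΦx I * Φ (matFun hx f) * specProj hΦx I).IsHermitian),
        ∀ s : ℝ, 0 < s →
          (specProj (matFun_isHermitian h2 fun t => max (-t) 0) (Set.Ioi s)).rank ≤
            (specProj (Matrix.IsHermitian.neg h1) (Set.Ioi s)).rank := by
  intro hΦx h1 h2 s hs
  classical
  set J : Set ℝ := {t | t ∈ I ∧ f t < -s} with hJ
  set g3 : ℝ → ℝ := fun t => -(Set.indicator I 1 t * f t * Set.indicator I 1 t) with hg3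
  -- Step A : LHS matrix
  have eL : specProj (matFun_isHermitian h2 fun t => max (-t) 0) (Set.Ioi s)
      = matFun h2 (Set.indicator (Set.Iio (-s)) 1) := by
    show matFun (matFun_isHermitian h2 _) (Set.indicator (Set.Ioi s) 1) = _
    rw [matFun_comp]
    have hfun : (Set.indicator (Set.Ioi s) 1 ∘ (fun t => max (-t) 0))
        = (Set.indicator (Set.Iio (-s)) 1 : ℝ → ℝ) := by
      funext t
      have hiff : (max (-t) 0 ∈ Set.Ioi s) ↔ t ∈ Set.Iio (-s) := by
        simp only [Set.mem_Ioi, Set.mem_Iio, lt_max_iff]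
        constructor
        · rintro (h | h) <;> linarith
        · intro h; left; linarith
      simp only [Function.comp_apply, Set.indicator_apply]
      rw [if_congr hiff rfl rfl]
      simp
    rw [hfun]
  -- Step B : RHS matrix
  have e2 : specProj hΦx I * matFun hΦx f * specProj hΦx I
      = matFun hΦx (fun t => Set.indicator I 1 t * f t * Set.indicator I 1 t) := by
    show matFun hΦx (Set.indicator I 1) * matFun hΦx f * matFun hΦx (Set.indicator I 1) = _
    rw [matFun_mul, matFun_mul]
  have e3 : -(specProj hΦx I * matFun hΦx f * specProj hΦx I) = matFun hΦx g3 := by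
    rw [e2, hg3, matFun_neg]
  have eR : specProj (Matrix.IsHermitian.neg h1) (Set.Ioi s)
      = matFun hΦx (Set.indicator J 1) := by
    have t1 : specProj (Matrix.IsHermitian.neg h1) (Set.Ioi s)
        = cfc (Set.indicator (Set.Ioi s) 1)
            (-(specProj hΦx I * matFun hΦx f * specProj hΦx I)) :=
      ((Matrix.IsHermitian.neg h1).cfc_eq _).symm
    have t2 : cfc (Set.indicator (Set.Ioi s) 1) (matFun hΦx g3)
        = matFun (matFun_isHermitian hΦx g3) (Set.indicator (Set.Ioi s) 1) :=
      (matFun_isHermitian hΦx g3).cfc_eq _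
    have hfun : (Set.indicator (Set.Ioi s) 1 ∘ g3) = (Set.indicator J 1 : ℝ → ℝ) := by
      funext t
      have hiff : (g3 t ∈ Set.Ioi s) ↔ t ∈ J := by
        by_cases htI : t ∈ I
        · simp only [hg3, hJ, Set.mem_Ioi, Set.mem_setOf_eq, Set.indicator_of_mem htI,
            Pi.one_apply, one_mul, mul_one, htI, true_and]
          constructor <;> intro h <;> linarith
        · simp only [hg3, hJ, Set.mem_Ioi, Set.mem_setOf_eq, Set.indicator_of_notMem htI,
            zero_mul, mul_zero, neg_zero, htI, false_and, iff_false, not_lt]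
          linarith
      simp only [Function.comp_apply, Set.indicator_apply]
      rw [if_congr hiff rfl rfl]
      simp
    rw [t1, e3, t2, matFun_comp, hfun]
  rw [eL, eR]
  show (matFun h2 (Set.indicator (Set.Iio (-s)) 1)).rank
      ≤ (matFun hΦx (Set.indicator J 1)).rank
  rw [matFun_rank h2, matFun_rank hΦx]
  by_contra hcon
  push_neg at hcon
  set ν := h2.eigenvalues with hν
  set μ := hΦx.eigenvalues with hμ
  -- cardinalities
  have hcard2 : (matFun hΦx (Set.indicator Jᶜ 1)).rank = n - Nat.card {i // μ i ∈ J} := by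
    rw [matFun_rank hΦx, Nat.card_eq_fintype_card, Nat.card_eq_fintype_card]
    calc Fintype.card {i // μ i ∈ Jᶜ}
        = Fintype.card {i // ¬ μ i ∈ J} := Fintype.card_congr
          (Equiv.subtypeEquivRight fun i => Iff.rfl)
      _ = Fintype.card (Fin n) - Fintype.card {i // μ i ∈ J} :=
          Fintype.card_subtype_compl _
      _ = n - Fintype.card {i // μ i ∈ J} := by rw [Fintype.card_fin]
  have hcardle : Nat.card {i // μ i ∈ J} ≤ n := by
    rw [Nat.card_eq_fintype_card]
    calc Fintype.card {i // μ i ∈ J} ≤ Fintype.card (Fin n) := Fintype.card_subtype_le _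
      _ = n := Fintype.card_fin n
  have hrank : n < (matFun h2 (Set.indicator (Set.Iio (-s)) 1)).rank
      + (matFun hΦx (Set.indicator Jᶜ 1)).rank := by
    rw [matFun_rank h2, hcard2, ← hν]
    omega
  obtain ⟨v, hv0, hvr1, hvr2⟩ := exists_mem_both_ranges _ _ hrank
  set y := specProj hΦx I * Φ (matFun hx f) * specProj hΦx I with hy
  set c' : Fin n → ℂ :=
    star (Matrix.IsHermitian.eigenvectorUnitary h2 : Matrix (Fin n) (Fin n) ℂ) *ᵥ v with hc'
  set c : Fin n → ℂ :=
    star (Matrix.IsHermitian.eigenvectorUnitary hΦx : Matrix (Fin n) (Fin n) ℂ) *ᵥ v with hc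
  set Nv : ℝ := ∑ i, Complex.normSq (v i) with hNvdef
  have hNv : 0 < Nv := by
    obtain ⟨i, hi⟩ := Function.ne_iff.mp hv0
    exact Finset.sum_pos' (fun j _ => Complex.normSq_nonneg _)
      ⟨i, Finset.mem_univ i, Complex.normSq_pos.mpr hi⟩
  have hNvc' : ∑ i, Complex.normSq (c' i) = Nv := sum_normSq_coord h2 v
  have hNvc : ∑ i, Complex.normSq (c i) = Nv := sum_normSq_coord hΦx v
  have hα : ∀ i, ¬(ν i < -s) → c' i = 0 := by
    intro i hi
    refine coord_zero_of_mem_range h2 _ hvr1 i ?_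
    simp [Set.indicator_apply, Set.mem_Iio, hi]
    exact not_lt.mp hi
  have hβ : ∀ i, μ i ∈ J → c i = 0 := by
    intro i hi
    refine coord_zero_of_mem_range hΦx _ hvr2 i ?_
    simp [Set.indicator_apply, hi]
    exact hi
  have hQy : star v ⬝ᵥ y *ᵥ v = ((∑ i, ν i * Complex.normSq (c' i) : ℝ) : ℂ) := by
    have hq := quadForm h2 (fun t => t) v
    rw [matFun_id h2] at hq
    exact hq
  set Qy : ℝ := ∑ i, ν i * Complex.normSq (c' i) with hQydef
  -- strict upper bound for Qy
  have hexc' : ∃ i, c' i ≠ 0 := by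
    by_contra hall
    push_neg at hall
    have : ∑ i, Complex.normSq (c' i) = 0 := by
      simp [hall]
    rw [hNvc'] at this
    linarith
  have hε : Qy < -s * Nv := by
    obtain ⟨i0, hi0⟩ := hexc'
    have hterm : ∀ i ∈ Finset.univ, ν i * Complex.normSq (c' i)
        ≤ -s * Complex.normSq (c' i) := by
      intro i _
      by_cases hci : c' i = 0
      · simp [hci]
      · have hν : ν i < -s := by
          by_contra hn
          exact hci (hα i hn)
        exact mul_le_mul_of_nonneg_right (le_of_lt hν) (Complex.normSq_nonneg _)
    have hstrict : ν i0 * Complex.normSq (c' i0) < -s * Complex.normSq (c' i0) := by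
      have hν : ν i0 < -s := by
        by_contra hn
        exact hi0 (hα i0 hn)
      exact mul_lt_mul_of_pos_right hν (Complex.normSq_pos.mpr hi0)
    calc Qy < ∑ i, -s * Complex.normSq (c' i) :=
        Finset.sum_lt_sum hterm ⟨i0, Finset.mem_univ i0, hstrict⟩
      _ = -s * ∑ i, Complex.normSq (c' i) := by rw [Finset.mul_sum]
      _ = -s * Nv := by rw [hNvc']
  -- lower bound via Choi
  set u : Fin n → ℂ := specProj hΦx I *ᵥ v with hu
  have hyu : star v ⬝ᵥ y *ᵥ v = star u ⬝ᵥ (Φ (matFun hx f)) *ᵥ u := by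
    rw [hy]
    exact herm_conj_quad (matFun_isHermitian hΦx (Set.indicator I 1)) v
  have hcu : star (Matrix.IsHermitian.eigenvectorUnitary hΦx : Matrix (Fin n) (Fin n) ℂ) *ᵥ u
      = fun i => ((Set.indicator I 1 (μ i) : ℝ) : ℂ) * c i :=
    coord_matFun hΦx (Set.indicator I 1) v
  set w : Fin n → ℝ := fun i =>
    Complex.normSq ((star (Matrix.IsHermitian.eigenvectorUnitary hΦx :
      Matrix (Fin n) (Fin n) ℂ) *ᵥ u) i) with hw
  have hw_eq : ∀ i, μ i ∈ I → w i = Complex.normSq (c i) := by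
    intro i hi
    rw [hw]
    simp only [hcu, Set.indicator_of_mem hi, Pi.one_apply, Complex.ofReal_one, one_mul]
  have hw_zero : ∀ i, μ i ∉ I → w i = 0 := by
    intro i hi
    rw [hw]
    simp only [hcu, Set.indicator_of_notMem hi, Complex.ofReal_zero, zero_mul,
      Complex.normSq_zero]
  have hw_zeroJ : ∀ i, μ i ∈ J → w i = 0 := by
    intro i hi
    rw [hw]
    simp only [hcu, hβ i hi, mul_zero, Complex.normSq_zero]
  have hw_nonneg : ∀ i, 0 ≤ w i := fun i => Complex.normSq_nonneg _
  have hwle : ∀ i, w i ≤ Complex.normSq (c i) := by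
    intro i
    by_cases hi : μ i ∈ I
    · rw [hw_eq i hi]
    · rw [hw_zero i hi]; exact Complex.normSq_nonneg _
  set Nu : ℝ := ∑ i, w i with hNu
  have hNuNv : Nu ≤ Nv := by
    rw [hNu, ← hNvc]
    exact Finset.sum_le_sum (fun i _ => hwle i)
  have hsumu : ∑ i, Complex.normSq (u i) = Nu := (sum_normSq_coord hΦx u).symm
  have hAu : (star u ⬝ᵥ (Φ x) *ᵥ u).re = ∑ i, μ i * w i := by
    have hq := quadForm hΦx (fun t => t) u
    rw [matFun_id hΦx] at hq
    rw [hq, Complex.ofReal_re]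
  have hQy_re : (star u ⬝ᵥ (Φ (matFun hx f)) *ᵥ u).re = Qy := by
    rw [← hyu, hQy, Complex.ofReal_re]
  have hNu_nonneg : 0 ≤ Nu := Finset.sum_nonneg (fun i _ => hw_nonneg i)
  rcases eq_or_lt_of_le hNu_nonneg with hNu0 | hNupos
  · -- Nu = 0 : u = 0
    have hu0 : u = 0 := by
      have hz : ∑ i, Complex.normSq (u i) = 0 := by rw [hsumu, ← hNu0]
      funext i
      have := (Finset.sum_eq_zero_iff_of_nonneg
        (fun j _ => Complex.normSq_nonneg (u j))).mp hz i (Finset.mem_univ i)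
      exact Complex.normSq_eq_zero.mp this
    have : Qy = 0 := by
      rw [← hQy_re, hu0]
      simp
    nlinarith
  · -- Nu > 0
    set T : Finset (Fin n) := Finset.univ.filter (fun i => w i ≠ 0) with hT
    have hTne : T.Nonempty := by
      by_contra hemp
      rw [Finset.not_nonempty_iff_eq_empty] at hemp
      have : Nu = 0 := by
        rw [hNu]
        apply Finset.sum_eq_zero
        intro i _
        by_contra hne
        have : i ∈ T := by rw [hT]; simp [hne]
        rw [hemp] at this
        exact absurd this (Finset.notMem_empty i)
      linarith
    obtain ⟨i0, hi0T, hi0min⟩ := T.exists_min_image μ hTne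
    obtain ⟨i1, hi1T, hi1max⟩ := T.exists_max_image μ hTne
    have hmemT : ∀ i ∈ T, μ i ∈ I ∧ μ i ∉ J := by
      intro i hi
      rw [hT, Finset.mem_filter] at hi
      constructor
      · by_contra hni
        exact hi.2 (hw_zero i hni)
      · intro hiJ
        exact hi.2 (hw_zeroJ i hiJ)
    set Msum : ℝ := ∑ i, μ i * w i with hMsum
    have hlow : μ i0 * Nu ≤ Msum := by
      rw [hNu, Finset.mul_sum, hMsum]
      apply Finset.sum_le_sum
      intro i _
      by_cases hwi : w i = 0
      · simp [hwi]
      · have hiT : i ∈ T := by rw [hT]; simp [hwi]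
        exact mul_le_mul_of_nonneg_right (hi0min i hiT) (hw_nonneg i)
    have hhigh : Msum ≤ μ i1 * Nu := by
      rw [hNu, Finset.mul_sum, hMsum]
      apply Finset.sum_le_sum
      intro i _
      by_cases hwi : w i = 0
      · simp [hwi]
      · have hiT : i ∈ T := by rw [hT]; simp [hwi]
        exact mul_le_mul_of_nonneg_right (hi1max i hiT) (hw_nonneg i)
    set m : ℝ := Msum / Nu with hm
    have hm0 : μ i0 ≤ m := by
      rw [hm, le_div_iff₀ hNupos]
      exact hlow
    have hm1 : m ≤ μ i1 := by
      rw [hm, div_le_iff₀ hNupos]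
      exact hhigh
    have hmI : m ∈ I := hI.out (hmemT i0 hi0T).1 (hmemT i1 hi1T).1 ⟨hm0, hm1⟩
    have hmfm : -s ≤ f m := by
      rcases hmono with hmon | hant
      · have h1' : f (μ i0) ≤ f m := hmon (hmemT i0 hi0T).1 hmI hm0
        have h2' : ¬ f (μ i0) < -s := by
          intro hcon'
          exact (hmemT i0 hi0T).2 ⟨(hmemT i0 hi0T).1, hcon'⟩
        linarith
      · have h1' : f (μ i1) ≤ f m := hant hmI (hmemT i1 hi1T).1 hm1
        have h2' : ¬ f (μ i1) < -s := by
          intro hcon'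
          exact (hmemT i1 hi1T).2 ⟨(hmemT i1 hi1T).1, hcon'⟩
        linarith
    have hfm0 : f m ≤ 0 := hfI m hmI
    obtain ⟨a, b, hab, habm⟩ := exists_supporting_line hconv m
    have hchoi := choi_quad Φ hΦpos hΦ1 hx f a b hab u
    rw [hAu, hsumu, hQy_re] at hchoi
    have hMm : Msum = m * Nu := by
      rw [hm, div_mul_cancel₀]
      exact ne_of_gt hNupos
    have hfinal : f m * Nu ≤ Qy := by
      calc f m * Nu = (a * m + b) * Nu := by rw [habm]
        _ = a * (m * Nu) + b * Nu := by ring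
        _ = a * Msum + b * Nu := by rw [hMm]
        _ ≤ Qy := hchoi
    have hfmNv : f m * Nv ≤ f m * Nu := mul_le_mul_of_nonpos_left hNuNv hfm0
    have hsNv : -s * Nv ≤ f m * Nv := mul_le_mul_of_nonneg_right hmfm (le_of_lt hNv)
    linarith
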